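/- For all natural numbers n, k with n/9 ≤ k ≤ n/3 and n ≡ 2k (mod 7), there exists an edge-coloured graph G on n vertices with minimum colour degree exactly (n+12k)/7 − 1 that contains no collection of k pairwise vertex-disjoint rainbow triangles. -/

import Mathlib

/-! Auxiliary construction for rainbow triangle tiling lower bound. -/

def myAdjP (t1 t2 t3 a b : ℕ) : Prop :=
  a ≠ b ∧ ((a < t2 ∧ b < t2) ∨ (t1 ≤ a ∧ a < t2 ∧ t2 ≤ b) ∨ (t1 ≤ b ∧ b < t2 ∧ t2 ≤ a) ∨
    (t2 ≤ a ∧ a < t3 ∧ t3 ≤ b) ∨ (t2 ≤ b ∧ b < t3 ∧ t3 ≤ a))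

instance (t1 t2 t3 a b : ℕ) : Decidable (myAdjP t1 t2 t3 a b) := by
  unfold myAdjP; infer_instance

def myG (n t1 t2 t3 : ℕ) : SimpleGraph (Fin n) where
  Adj u v := myAdjP t1 t2 t3 u.val v.val
  symm := by constructor; intro u v h; unfold myAdjP at *; omega
  loopless := by constructor; intro v h; exact h.1 rfl

instance (n t1 t2 t3 : ℕ) : DecidableRel (myG n t1 t2 t3).Adj :=
  fun u v => inferInstanceAs (Decidable (myAdjP t1 t2 t3 u.val v.val))

lemma myG_adj (n t1 t2 t3 : ℕ) (u v : Fin n) :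
    (myG n t1 t2 t3).Adj u v ↔ myAdjP t1 t2 t3 u.val v.val := Iff.rfl

def myc (n t1 t2 : ℕ) (u v : Fin n) : ℕ :=
  if t1 ≤ min u.val v.val ∧ min u.val v.val < t2 ∧ t2 ≤ max u.val v.val
  then min u.val v.val else (min u.val v.val + 1) * n + max u.val v.val

lemma myc_symm (n t1 t2 : ℕ) (u v : Fin n) : myc n t1 t2 u v = myc n t1 t2 v u := by
  unfold myc; rw [min_comm u.val v.val, max_comm u.val v.val]

lemma myc_alpha (n t1 t2 : ℕ) {u v : Fin n} (h1 : t1 ≤ u.val) (h2 : u.val < t2)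
    (h3 : t2 ≤ v.val) : myc n t1 t2 u v = u.val := by
  unfold myc
  have hm : min u.val v.val = u.val := by omega
  have hM : max u.val v.val = v.val := by omega
  rw [hm, hM, if_pos ⟨h1, h2, h3⟩]

lemma myc_code (n t1 t2 : ℕ) {u v : Fin n}
    (h : ¬(t1 ≤ min u.val v.val ∧ min u.val v.val < t2 ∧ t2 ≤ max u.val v.val)) :
    myc n t1 t2 u v = (min u.val v.val + 1) * n + max u.val v.val := by
  unfold myc; rw [if_neg h]

lemma code_inj {n a b a' b' : ℕ} (hb : b < n) (hb' : b' < n)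
    (h : (a + 1) * n + b = (a' + 1) * n + b') : a = a' ∧ b = b' := by
  have h1 : b = b' := by
    have h2 := congrArg (· % n) h
    simpa [Nat.mul_add_mod', Nat.mul_add_mod, Nat.mod_eq_of_lt hb, Nat.mod_eq_of_lt hb'] using h2
  subst h1
  have h2 : (a + 1) * n = (a' + 1) * n := by omega
  have hn : 0 < n := by omega
  have := Nat.eq_of_mul_eq_mul_right hn h2
  omega

lemma code_ge {n a b : ℕ} : n ≤ (a + 1) * n + b := by
  have : 1 * n ≤ (a + 1) * n := Nat.mul_le_mul_right n (by omega)
  omega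

def myw (t1 t2 : ℕ) {n : ℕ} (v : Fin n) : ℕ :=
  if v.val < t1 then 2 else if v.val < t2 then 3 else 0

lemma ncard_eq_card {n : ℕ} (G : SimpleGraph (Fin n)) [DecidableRel G.Adj]
    (c : Fin n → Fin n → ℕ) (v : Fin n) :
    Set.ncard (c v '' {w | G.Adj v w}) =
      ((Finset.univ.filter (fun w => G.Adj v w)).image (c v)).card := by
  rw [show {w | G.Adj v w} = ↑(Finset.univ.filter (fun w => G.Adj v w)) by ext w; simp]
  rw [← Finset.coe_image, Set.ncard_coe_finset]

lemma lb {n : ℕ} (G : SimpleGraph (Fin n)) [DecidableRel G.Adj]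
    (c : Fin n → Fin n → ℕ) (v : Fin n) (S : Finset (Fin n))
    (hsub : ∀ w ∈ S, G.Adj v w) (hinj : Set.InjOn (c v) ↑S) :
    S.card ≤ Set.ncard (c v '' {w | G.Adj v w}) := by
  rw [ncard_eq_card]
  calc S.card = (S.image (c v)).card := (Finset.card_image_of_injOn hinj).symm
    _ ≤ _ := Finset.card_le_card (Finset.image_subset_image
        (fun w hw => Finset.mem_filter.2 ⟨Finset.mem_univ _, hsub w hw⟩))

lemma yexact (n t1 t2 t3 : ℕ) (h12 : t1 ≤ t2) (h23 : t2 ≤ t3) (h3n : t3 < n)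
    (v : Fin n) (hv : t3 ≤ v.val) :
    Set.ncard (myc n t1 t2 v '' {w | (myG n t1 t2 t3).Adj v w}) = t3 - t1 := by
  have hvn := v.isLt
  rw [ncard_eq_card]
  have hbound : ∀ m ∈ Finset.Ico t1 t3, m < n := by
    intro m hm; rw [Finset.mem_Ico] at hm; omega
  have hfil : Finset.univ.filter (fun w => (myG n t1 t2 t3).Adj v w) =
      Finset.attachFin (Finset.Ico t1 t3) hbound := by
    ext w
    have hwn := w.isLt
    simp only [Finset.mem_filter, Finset.mem_univ, true_and, Finset.mem_attachFin,
      Finset.mem_Ico, myG_adj]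
    unfold myAdjP; omega
  rw [hfil]
  have hinj : Set.InjOn (myc n t1 t2 v) ↑(Finset.attachFin (Finset.Ico t1 t3) hbound) := by
    intro w1 hw1 w2 hw2 heq
    rw [Finset.mem_coe, Finset.mem_attachFin, Finset.mem_Ico] at hw1 hw2
    have h1n := w1.isLt; have h2n := w2.isLt
    have compute : ∀ w : Fin n, t1 ≤ w.val → w.val < t3 →
        myc n t1 t2 v w = (if w.val < t2 then w.val else (w.val + 1) * n + v.val) := by
      intro w hw1' hw2'
      by_cases hw : w.val < t2
      · rw [if_pos hw, myc_symm, myc_alpha n t1 t2 hw1' hw (by omega)]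
      · rw [if_neg hw, myc_code]
        · have hm : min v.val w.val = w.val := by omega
          have hM : max v.val w.val = v.val := by omega
          rw [hm, hM]
        · have hm : min v.val w.val = w.val := by omega
          omega
    rw [compute w1 hw1.1 hw1.2, compute w2 hw2.1 hw2.2] at heq
    by_cases hc1 : w1.val < t2 <;> by_cases hc2 : w2.val < t2
    · rw [if_pos hc1, if_pos hc2] at heq; exact Fin.ext heq
    · rw [if_pos hc1, if_neg hc2] at heq
      have := @code_ge n w2.val v.val; omega
    · rw [if_neg hc1, if_pos hc2] at heq
      have := @code_ge n w1.val v.val; omega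
    · rw [if_neg hc1, if_neg hc2] at heq
      have := code_inj hvn hvn heq
      exact Fin.ext (by omega)
  rw [Finset.card_image_of_injOn hinj, Finset.card_attachFin, Nat.card_Ico]

lemma core (n t1 t2 t3 : ℕ) {x y z : Fin n}
    (axy : (myG n t1 t2 t3).Adj x y) (axz : (myG n t1 t2 t3).Adj x z)
    (ayz : (myG n t1 t2 t3).Adj y z)
    (d1 : myc n t1 t2 x y ≠ myc n t1 t2 x z)
    (d2 : myc n t1 t2 x y ≠ myc n t1 t2 y z)
    (hz : t2 ≤ z.val) :
    6 ≤ myw t1 t2 x + myw t1 t2 y + myw t1 t2 z := by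
  have hxz : myAdjP t1 t2 t3 x.val z.val := axz
  have hyz : myAdjP t1 t2 t3 y.val z.val := ayz
  have hxy : myAdjP t1 t2 t3 x.val y.val := axy
  have hx' : (t1 ≤ x.val ∧ x.val < t2) ∨ t2 ≤ x.val := by unfold myAdjP at hxz; omega
  have hy' : (t1 ≤ y.val ∧ y.val < t2) ∨ t2 ≤ y.val := by unfold myAdjP at hyz; omega
  rcases hx' with hxA | hxB <;> rcases hy' with hyA | hyB
  · unfold myw; split_ifs <;> omega
  · have e1 : myc n t1 t2 x y = x.val := myc_alpha n t1 t2 hxA.1 hxA.2 hyB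
    have e2 : myc n t1 t2 x z = x.val := myc_alpha n t1 t2 hxA.1 hxA.2 hz
    exact absurd (e1.trans e2.symm) d1
  · have e1 : myc n t1 t2 x y = y.val := by
      rw [myc_symm]; exact myc_alpha n t1 t2 hyA.1 hyA.2 hxB
    have e2 : myc n t1 t2 y z = y.val := myc_alpha n t1 t2 hyA.1 hyA.2 hz
    exact absurd (e1.trans e2.symm) d2
  · unfold myAdjP at hxy hxz hyz; omega

lemma triple (n t1 t2 t3 : ℕ) {x y z : Fin n}
    (axy : (myG n t1 t2 t3).Adj x y) (axz : (myG n t1 t2 t3).Adj x z)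
    (ayz : (myG n t1 t2 t3).Adj y z)
    (d1 : myc n t1 t2 x y ≠ myc n t1 t2 x z)
    (d2 : myc n t1 t2 x y ≠ myc n t1 t2 y z)
    (d3 : myc n t1 t2 x z ≠ myc n t1 t2 y z) :
    6 ≤ myw t1 t2 x + myw t1 t2 y + myw t1 t2 z := by
  by_cases hz : t2 ≤ z.val
  · exact core n t1 t2 t3 axy axz ayz d1 d2 hz
  by_cases hy : t2 ≤ y.val
  · have h := core n t1 t2 t3 axz axy ayz.symm (Ne.symm d1)
      (by rw [myc_symm n t1 t2 z y]; exact d3) hy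
    omega
  by_cases hx : t2 ≤ x.val
  · have h := core n t1 t2 t3 ayz axy.symm axz.symm
      (by rw [myc_symm n t1 t2 y x]; exact Ne.symm d2)
      (by rw [myc_symm n t1 t2 z x]; exact Ne.symm d3) hx
    omega
  · unfold myw; split_ifs <;> omega

lemma sum_myw (n t1 t2 : ℕ) (h12 : t1 ≤ t2) (h2n : t2 ≤ n) :
    ∑ v : Fin n, myw t1 t2 v = 2 * t1 + 3 * (t2 - t1) := by
  have e1 : ∑ v : Fin n, myw t1 t2 v =
      ∑ i ∈ Finset.range n, (if i < t1 then 2 else if i < t2 then 3 else 0) :=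
    Fin.sum_univ_eq_sum_range (fun i => if i < t1 then 2 else if i < t2 then 3 else 0) n
  rw [e1, Finset.range_eq_Ico,
    ← Finset.sum_Ico_consecutive _ (Nat.zero_le t1) (h12.trans h2n),
    ← Finset.sum_Ico_consecutive _ h12 h2n]
  have s1 : ∑ i ∈ Finset.Ico 0 t1, (if i < t1 then 2 else if i < t2 then 3 else 0)
      = 2 * t1 := by
    calc ∑ i ∈ Finset.Ico 0 t1, (if i < t1 then 2 else if i < t2 then 3 else 0)
        = ∑ _i ∈ Finset.Ico 0 t1, 2 := Finset.sum_congr rfl (fun i hi => by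
          rw [Finset.mem_Ico] at hi; rw [if_pos hi.2])
      _ = 2 * t1 := by rw [Finset.sum_const, Nat.card_Ico, smul_eq_mul]; omega
  have s2 : ∑ i ∈ Finset.Ico t1 t2, (if i < t1 then 2 else if i < t2 then 3 else 0)
      = 3 * (t2 - t1) := by
    calc ∑ i ∈ Finset.Ico t1 t2, (if i < t1 then 2 else if i < t2 then 3 else 0)
        = ∑ _i ∈ Finset.Ico t1 t2, 3 := Finset.sum_congr rfl (fun i hi => by
          rw [Finset.mem_Ico] at hi; rw [if_neg (by omega), if_pos hi.2])
      _ = 3 * (t2 - t1) := by rw [Finset.sum_const, Nat.card_Ico, smul_eq_mul]; omega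
  have s3 : ∑ i ∈ Finset.Ico t2 n, (if i < t1 then 2 else if i < t2 then 3 else 0)
      = 0 := by
    calc ∑ i ∈ Finset.Ico t2 n, (if i < t1 then 2 else if i < t2 then 3 else 0)
        = ∑ _i ∈ Finset.Ico t2 n, 0 := Finset.sum_congr rfl (fun i hi => by
          rw [Finset.mem_Ico] at hi; rw [if_neg (by omega), if_neg (by omega)])
      _ = 0 := Finset.sum_const_zero
  rw [s1, s2, s3]
  omega

theorem main (n k t1 t2 t3 d : ℕ) (hk : 1 ≤ k)
    (h12 : t1 ≤ t2) (h23 : t2 ≤ t3) (h3n : t3 < n)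
    (hYp : t3 - t1 = d)
    (hXq : d ≤ (t2 - t1) + (n - t3))
    (hA : t2 = 0 ∨ d + 1 ≤ t2)
    (hblock : 2 * t1 + 3 * (t2 - t1) < 6 * k) :
    ∃ (G : SimpleGraph (Fin n)) (c : Fin n → Fin n → ℕ),
      (∀ u v, c u v = c v u) ∧
      (∀ v : Fin n, d ≤ Set.ncard ((c v) '' {w | G.Adj v w})) ∧
      (∃ v : Fin n, Set.ncard ((c v) '' {w | G.Adj v w}) = d) ∧
      ¬ ∃ T : Finset (Finset (Fin n)), T.card = k ∧
        (∀ S ∈ T, ∃ x y z : Fin n, S = {x, y, z} ∧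
          G.Adj x y ∧ G.Adj x z ∧ G.Adj y z ∧
          c x y ≠ c x z ∧ c x y ≠ c y z ∧ c x z ≠ c y z) ∧
        (∀ S ∈ T, ∀ S' ∈ T, S ≠ S' → Disjoint S S') := by
  refine ⟨myG n t1 t2 t3, myc n t1 t2, fun u v => myc_symm n t1 t2 u v, ?_, ?_, ?_⟩
  · -- minimum colour degree at least d
    intro v
    have hvn := v.isLt
    by_cases hv2 : v.val < t2
    · -- v ∈ A
      have hA' : d + 1 ≤ t2 := by rcases hA with h0 | h <;> omega
      have hbound : ∀ m ∈ (Finset.Ico 0 t2).erase v.val, m < n := by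
        intro m hm
        rw [Finset.mem_erase, Finset.mem_Ico] at hm; omega
      refine le_trans ?_ (lb (myG n t1 t2 t3) (myc n t1 t2) v
        (Finset.attachFin ((Finset.Ico 0 t2).erase v.val) hbound) ?_ ?_)
      · rw [Finset.card_attachFin, Finset.card_erase_of_mem (by
          rw [Finset.mem_Ico]; omega), Nat.card_Ico]
        omega
      · intro w hw
        rw [Finset.mem_attachFin, Finset.mem_erase, Finset.mem_Ico] at hw
        show myAdjP t1 t2 t3 v.val w.val
        unfold myAdjP; omega
      · intro w1 hw1 w2 hw2 heq
        rw [Finset.mem_coe, Finset.mem_attachFin, Finset.mem_erase, Finset.mem_Ico] at hw1 hw2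
        have h1n := w1.isLt; have h2n := w2.isLt
        rw [myc_code n t1 t2 (by omega), myc_code n t1 t2 (by omega)] at heq
        have := code_inj (n := n) (by omega) (by omega) heq
        exact Fin.ext (by omega)
    · by_cases hv3 : v.val < t3
      · -- v ∈ X
        have hbound : ∀ m ∈ Finset.Ico t1 t2 ∪ Finset.Ico t3 n, m < n := by
          intro m hm
          rw [Finset.mem_union, Finset.mem_Ico, Finset.mem_Ico] at hm; omega
        refine le_trans ?_ (lb (myG n t1 t2 t3) (myc n t1 t2) v
          (Finset.attachFin (Finset.Ico t1 t2 ∪ Finset.Ico t3 n) hbound) ?_ ?_)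
        · rw [Finset.card_attachFin, Finset.card_union_of_disjoint (by
            rw [Finset.disjoint_left]
            intro m hm1 hm2
            rw [Finset.mem_Ico] at hm1 hm2; omega), Nat.card_Ico, Nat.card_Ico]
          omega
        · intro w hw
          rw [Finset.mem_attachFin, Finset.mem_union, Finset.mem_Ico, Finset.mem_Ico] at hw
          show myAdjP t1 t2 t3 v.val w.val
          unfold myAdjP; omega
        · intro w1 hw1 w2 hw2 heq
          rw [Finset.mem_coe, Finset.mem_attachFin, Finset.mem_union, Finset.mem_Ico,
            Finset.mem_Ico] at hw1 hw2
          have h1n := w1.isLt; have h2n := w2.isLt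
          have compute : ∀ w : Fin n, (t1 ≤ w.val ∧ w.val < t2) ∨ (t3 ≤ w.val ∧ w.val < n) →
              myc n t1 t2 v w =
                (if w.val < t2 then w.val else (v.val + 1) * n + w.val) := by
            intro w hw
            rcases hw with hwA | hwY
            · rw [if_pos hwA.2, myc_symm, myc_alpha n t1 t2 hwA.1 hwA.2 (by omega)]
            · rw [if_neg (by omega), myc_code n t1 t2 (by
                have hm : min v.val w.val = v.val := by omega
                omega)]
              have hm : min v.val w.val = v.val := by omega
              have hM : max v.val w.val = w.val := by omega
              rw [hm, hM]
          rw [compute w1 hw1, compute w2 hw2] at heq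
          by_cases hc1 : w1.val < t2 <;> by_cases hc2 : w2.val < t2
          · rw [if_pos hc1, if_pos hc2] at heq; exact Fin.ext heq
          · rw [if_pos hc1, if_neg hc2] at heq
            have := @code_ge n v.val w2.val; omega
          · rw [if_neg hc1, if_pos hc2] at heq
            have := @code_ge n v.val w1.val; omega
          · rw [if_neg hc1, if_neg hc2] at heq
            have := code_inj (n := n) (by omega) (by omega) heq
            exact Fin.ext (by omega)
      · -- v ∈ Y
        rw [yexact n t1 t2 t3 h12 h23 h3n v (by omega)]
        omega
  · -- a vertex of colour degree exactly d
    refine ⟨⟨n - 1, by omega⟩, ?_⟩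
    rw [yexact n t1 t2 t3 h12 h23 h3n _ (by simp; omega)]
    exact hYp
  · -- no k disjoint rainbow triangles
    rintro ⟨T, hTcard, hrb, hdisj⟩
    have h6 : ∀ S ∈ T, 6 ≤ ∑ v ∈ S, myw t1 t2 v := by
      intro S hS
      obtain ⟨x, y, z, hSxyz, axy, axz, ayz, d1, d2, d3⟩ := hrb S hS
      have hxy : x ≠ y := fun h => axy.1 (congrArg Fin.val h)
      have hxz : x ≠ z := fun h => axz.1 (congrArg Fin.val h)
      have hyz : y ≠ z := fun h => ayz.1 (congrArg Fin.val h)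
      have hsum : ∑ v ∈ S, myw t1 t2 v = myw t1 t2 x + myw t1 t2 y + myw t1 t2 z := by
        subst hSxyz
        rw [Finset.sum_insert (by simp [hxy, hxz]), Finset.sum_insert (by simp [hyz]),
          Finset.sum_singleton]
        ring
      rw [hsum]
      exact triple n t1 t2 t3 axy axz ayz d1 d2 d3
    have hpd : (↑T : Set (Finset (Fin n))).PairwiseDisjoint id :=
      fun S hS S' hS' hne => hdisj S hS S' hS' hne
    have hle : ∑ S ∈ T, ∑ v ∈ S, myw t1 t2 v ≤ ∑ v : Fin n, myw t1 t2 v := by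
      calc ∑ S ∈ T, ∑ v ∈ S, myw t1 t2 v
          = ∑ v ∈ T.biUnion id, myw t1 t2 v := (Finset.sum_biUnion hpd).symm
        _ ≤ ∑ v : Fin n, myw t1 t2 v :=
            Finset.sum_le_sum_of_subset (Finset.subset_univ _)
    have hge : 6 * k ≤ ∑ S ∈ T, ∑ v ∈ S, myw t1 t2 v := by
      calc 6 * k = ∑ _S ∈ T, 6 := by rw [Finset.sum_const, hTcard, smul_eq_mul]; ring
        _ ≤ _ := Finset.sum_le_sum h6
    rw [sum_myw n t1 t2 h12 (by omega)] at hle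
    omega

/-- For `n/9 ≤ k ≤ n/3` with `n ≡ 2k (mod 7)` there is an edge-coloured graph on `n`
vertices with minimum colour degree exactly `(n+12k)/7 - 1` and no `k` pairwise
vertex-disjoint rainbow triangles. -/
theorem stmt_2 (n k : ℕ) (hk : 1 ≤ k) (h1 : n ≤ 9 * k) (h2 : 3 * k ≤ n)
    (h3 : n % 7 = (2 * k) % 7) :
    ∃ (G : SimpleGraph (Fin n)) (c : Fin n → Fin n → ℕ),
      (∀ u v, c u v = c v u) ∧
      (∀ v : Fin n, (n + 12 * k) / 7 - 1 ≤ Set.ncard ((c v) '' {w | G.Adj v w})) ∧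
      (∃ v : Fin n, Set.ncard ((c v) '' {w | G.Adj v w}) = (n + 12 * k) / 7 - 1) ∧
      ¬ ∃ T : Finset (Finset (Fin n)), T.card = k ∧
        (∀ S ∈ T, ∃ x y z : Fin n, S = {x, y, z} ∧
          G.Adj x y ∧ G.Adj x z ∧ G.Adj y z ∧
          c x y ≠ c x z ∧ c x y ≠ c y z ∧ c x z ≠ c y z) ∧
        (∀ S ∈ T, ∀ S' ∈ T, S ≠ S' → Disjoint S S') := by
  obtain ⟨m, hm⟩ : ∃ m, n = 7 * m + 2 * k := ⟨(n - 2 * k) / 7, by omega⟩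
  by_cases hmk : m < k
  · rw [show (n + 12 * k) / 7 - 1 = m + 2 * k - 1 from by omega]
    exact main n k (3 * m + 1) (2 * k + m) (2 * k + 4 * m) (m + 2 * k - 1) hk
      (by omega) (by omega) (by omega) (by omega) (by omega) (by omega) (by omega)
  · have hmk' : m = k := by omega
    rw [show (n + 12 * k) / 7 - 1 = 3 * k - 1 from by omega]
    exact main n k 0 0 (3 * k - 1) (3 * k - 1) hk
      (by omega) (by omega) (by omega) (by omega) (by omega) (Or.inl rfl) (by omega)
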